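/- Let S(c,t) = Σ_{r,s ≥ 0} N(r,s) c^r t^s ∈ ℚ⟦c,t⟧ be the two-variable ordinary generating function for decorated Dyck paths with no undecorated up-down-up factor, where N(r,s) is the number of such paths with r up-steps and s decorated double-up-steps. Then S satisfies the cubic equation S = 1 + c·(1+c)⁻¹·S² + t·S³, or equivalently (1+c)·S = (1+c) + c·S² + (1+c)·t·S³ in ℚ⟦c,t⟧. -/

import Mathlib

/-- The steps of a decorated Dyck path: an up-step `u`, a down-step `d`,
and a decorated double-up-step `T`. -/
inductive DStep : Type
  | u : DStep
  | d : DStep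
  | T : DStep
deriving DecidableEq

/-- The height change of each step. -/
def DStep.hchange : DStep → ℤ
  | .u => 1
  | .d => -1
  | .T => 2

/-- A decorated Dyck path: every partial sum of height changes is nonnegative and
the total sum of height changes is `0`. -/
def IsDecoratedDyck (w : List DStep) : Prop :=
  (∀ p : List DStep, p <+: w → 0 ≤ (p.map DStep.hchange).sum) ∧
    (w.map DStep.hchange).sum = 0

/-- `w` has no undecorated up-down-up factor. -/
def NoUDU (w : List DStep) : Prop :=
  ¬ [DStep.u, DStep.d, DStep.u] <:+: w

/-- `dyckCount r s` is the number of decorated Dyck paths with no undecorated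
up-down-up factor having exactly `r` up-steps and `s` decorated double-up-steps. -/
noncomputable def dyckCount (r s : ℕ) : ℕ :=
  Set.ncard {w : List DStep | IsDecoratedDyck w ∧ NoUDU w ∧
    w.count DStep.u = r ∧ w.count DStep.T = s}

/-- The two-variable ordinary generating function for decorated Dyck paths with no
undecorated up-down-up factor, by number of up-steps and double-up-steps. -/
noncomputable def dyckGF : MvPowerSeries (Fin 2) ℚ :=
  fun e => (dyckCount (e 0) (e 1) : ℚ)
section Aux
namespace DyckAux

open List Finset

instance : Fintype DStep :=
  ⟨⟨{DStep.u, DStep.d, DStep.T}, by decide⟩, by intro x; cases x <;> decide⟩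

def hsum (w : List DStep) : ℤ := (w.map DStep.hchange).sum

@[simp] lemma hsum_nil : hsum ([] : List DStep) = 0 := rfl

@[simp] lemma hsum_cons (a : DStep) (w : List DStep) :
    hsum (a :: w) = a.hchange + hsum w := by simp [hsum]

@[simp] lemma hsum_append (x y : List DStep) :
    hsum (x ++ y) = hsum x + hsum y := by simp [hsum]

lemma dd_iff (w : List DStep) :
    IsDecoratedDyck w ↔ (∀ p, p <+: w → 0 ≤ hsum p) ∧ hsum w = 0 := Iff.rfl

lemma hsum_eq_count (w : List DStep) :
    hsum w = (w.count DStep.u : ℤ) + 2 * (w.count DStep.T : ℤ) - (w.count DStep.d : ℤ) := by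
  induction w with
  | nil => simp
  | cons a w ih =>
    cases a <;> simp [List.count_cons, DStep.hchange, ih] <;> push_cast <;> ring

lemma length_eq_count (w : List DStep) :
    w.length = w.count DStep.u + w.count DStep.d + w.count DStep.T := by
  induction w with
  | nil => simp
  | cons a w ih => cases a <;> simp [List.count_cons, ih] <;> omega

lemma dd_nil : IsDecoratedDyck ([] : List DStep) := by
  constructor
  · intro p hp; rw [List.prefix_nil.mp hp]; simp
  · simp

lemma noudu_nil : NoUDU ([] : List DStep) := by
  rintro ⟨s, t, h⟩; simp at h

lemma not_dd_cons_d {w : List DStep} (h : IsDecoratedDyck (DStep.d :: w)) : False := by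
  have h1 : (0:ℤ) ≤ hsum [DStep.d] := h.1 [DStep.d] ⟨w, rfl⟩
  simp [DStep.hchange] at h1

lemma dd_head_ne_d {a : DStep} {w : List DStep} (h : IsDecoratedDyck (a :: w)) :
    a ≠ DStep.d := by
  rintro rfl; exact not_dd_cons_d h

lemma getLast?_eq_d {w : List DStep} (h : IsDecoratedDyck w) (hw : w ≠ []) :
    w.getLast? = some DStep.d := by
  rcases List.eq_nil_or_concat w with rfl | ⟨L, b, rfl⟩
  · exact absurd rfl hw
  · simp only [List.concat_eq_append] at h ⊢
    have h0 : hsum (L ++ [b]) = 0 := h.2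
    have h1 : (0:ℤ) ≤ hsum L := h.1 L ⟨[b], rfl⟩
    rw [hsum_append, hsum_cons, hsum_nil] at h0
    cases b with
    | u => simp [DStep.hchange] at h0; omega
    | d => simp
    | T => simp [DStep.hchange] at h0; omega

lemma dd_getLast?_ne_u {w : List DStep} (h : IsDecoratedDyck w) :
    w.getLast? ≠ some DStep.u := by
  rcases eq_or_ne w [] with rfl | hw
  · simp
  · rw [getLast?_eq_d h hw]; simp

end DyckAux
end Aux
section Aux2
namespace DyckAux
open List

lemma prefix_append_cases {α : Type*} {p x y : List α} (h : p <+: x ++ y) :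
    p <+: x ∨ ∃ q, p = x ++ q ∧ q <+: y := by
  obtain ⟨t, ht⟩ := h
  rcases List.append_eq_append_iff.mp ht with ⟨a', ha1, _⟩ | ⟨c', hc1, hc2⟩
  · exact Or.inl ⟨a', ha1.symm⟩
  · exact Or.inr ⟨c', hc1, ⟨t, hc2.symm⟩⟩

lemma infix_append_cases {α : Type*} {p x y : List α} (h : p <:+: x ++ y) :
    p <:+: x ∨ p <:+: y ∨ ∃ p₁ p₂, p = p₁ ++ p₂ ∧ p₁ <:+ x ∧ p₂ <+: y := by
  obtain ⟨s, t, hst⟩ := h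
  have hst' : s ++ (p ++ t) = x ++ y := by rw [← hst]; simp
  rcases List.append_eq_append_iff.mp hst' with ⟨a', hx, hpt⟩ | ⟨c', _, hy⟩
  · rcases List.append_eq_append_iff.mp hpt with ⟨b', ha', ht'⟩ | ⟨p₂, hp, hy2⟩
    · exact Or.inl ⟨s, b', by rw [hx, ha']; simp⟩
    · exact Or.inr (Or.inr ⟨a', p₂, hp, ⟨s, hx.symm⟩, ⟨t, hy2.symm⟩⟩)
  · exact Or.inr (Or.inl ⟨c', t, by rw [hy]; simp⟩)

lemma fr_exists {v : List DStep} (hv : hsum v ≤ -1) :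
    ∃ A B, v = A ++ DStep.d :: B ∧ IsDecoratedDyck A := by
  classical
  have hex : ∃ i, hsum (v.take i) ≤ -1 := ⟨v.length, by simpa using hv⟩
  set n := Nat.find hex with hn
  have hspec : hsum (v.take n) ≤ -1 := Nat.find_spec hex
  have hmin : ∀ j, j < n → 0 ≤ hsum (v.take j) := by
    intro j hj
    have := Nat.find_min hex hj
    omega
  have hn0 : n ≠ 0 := by
    intro h
    rw [h] at hspec; simp at hspec
  obtain ⟨k, hk⟩ := Nat.exists_eq_succ_of_ne_zero hn0
  have hkl : k < v.length := by
    by_contra hcon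
    push_neg at hcon
    have h1 : 0 ≤ hsum (v.take k) := hmin k (by omega)
    rw [List.take_of_length_le hcon] at h1
    omega
  have htake : v.take (k+1) = v.take k ++ [v[k]] := by
    rw [← List.take_concat_get hkl, List.concat_eq_append]
  have hks : hsum (v.take (k+1)) ≤ -1 := by
    rw [show k+1 = n from by omega]; exact hspec
  rw [htake, hsum_append, hsum_cons, hsum_nil] at hks
  have hk0 : 0 ≤ hsum (v.take k) := hmin k (by omega)
  have hch : (v[k]).hchange ≤ -1 := by omega
  have hd : v[k] = DStep.d := by
    cases hvk : v[k] with
    | u => rw [hvk] at hch; simp [DStep.hchange] at hch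
    | d => rfl
    | T => rw [hvk] at hch; simp [DStep.hchange] at hch
  have hA0 : hsum (v.take k) = 0 := by
    rw [hd] at hks; simp [DStep.hchange] at hks; omega
  refine ⟨v.take k, v.drop (k+1), ?_, ?_, hA0⟩
  · conv_lhs => rw [← List.take_append_drop (k+1) v]
    rw [htake, hd]
    simp
  · intro p hp
    have hpv : p <+: v := hp.trans (List.take_prefix k v)
    have hplen : p.length ≤ k := by
      have := hp.length_le
      simpa using this.trans (by simp)
    have hpeq : p = v.take p.length := List.prefix_iff_eq_take.mp hpv
    rw [hpeq]
    exact hmin p.length (by omega)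

lemma fr_unique {A₁ B₁ A₂ B₂ : List DStep} (h1 : IsDecoratedDyck A₁)
    (h2 : IsDecoratedDyck A₂)
    (h : A₁ ++ DStep.d :: B₁ = A₂ ++ DStep.d :: B₂) : A₁ = A₂ ∧ B₁ = B₂ := by
  rcases List.append_eq_append_iff.mp h with ⟨a, ha, hb⟩ | ⟨a, ha, hb⟩
  · cases a with
    | nil =>
      simp at ha hb
      exact ⟨ha.symm, hb⟩
    | cons x a' =>
      simp only [List.cons_append, List.cons.injEq] at hb
      obtain ⟨rfl, _⟩ := hb
      have hpre : A₁ ++ [DStep.d] <+: A₂ := ⟨a', by rw [ha]; simp⟩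
      have := h2.1 _ hpre
      have hh : (0:ℤ) ≤ hsum (A₁ ++ [DStep.d]) := this
      rw [hsum_append, hsum_cons, hsum_nil] at hh
      have hA1 : hsum A₁ = 0 := h1.2
      simp [DStep.hchange] at hh
      omega
  · cases a with
    | nil =>
      simp at ha hb
      exact ⟨ha, hb.symm⟩
    | cons x a' =>
      simp only [List.cons_append, List.cons.injEq] at hb
      obtain ⟨rfl, _⟩ := hb
      have hpre : A₂ ++ [DStep.d] <+: A₁ := ⟨a', by rw [ha]; simp⟩
      have hh : (0:ℤ) ≤ hsum (A₂ ++ [DStep.d]) := h1.1 _ hpre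
      rw [hsum_append, hsum_cons, hsum_nil] at hh
      have hA2 : hsum A₂ = 0 := h2.2
      simp [DStep.hchange] at hh
      omega

end DyckAux
end Aux2
section Aux3
namespace DyckAux
open List

lemma dy_u_comp {A B : List DStep} (hA : IsDecoratedDyck A) (hB : IsDecoratedDyck B) :
    IsDecoratedDyck (DStep.u :: (A ++ DStep.d :: B)) := by
  have hA0 : hsum A = 0 := hA.2
  have hB0 : hsum B = 0 := hB.2
  constructor
  · intro p hp
    show (0:ℤ) ≤ hsum p
    cases p with
    | nil => simp
    | cons a q =>
      rw [List.cons_prefix_cons] at hp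
      obtain ⟨rfl, hq⟩ := hp
      rcases prefix_append_cases hq with hqA | ⟨q', rfl, hq'⟩
      · have : (0:ℤ) ≤ hsum q := hA.1 q hqA
        rw [hsum_cons]; simp [DStep.hchange]; omega
      · cases q' with
        | nil =>
          rw [hsum_cons, hsum_append]
          simp [DStep.hchange, hA0]
        | cons b q'' =>
          rw [List.cons_prefix_cons] at hq'
          obtain ⟨rfl, hq''⟩ := hq'
          have : (0:ℤ) ≤ hsum q'' := hB.1 q'' hq''
          rw [hsum_cons, hsum_append, hsum_cons]
          simp [DStep.hchange, hA0]; omega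
  · show hsum _ = 0
    rw [hsum_cons, hsum_append, hsum_cons]
    simp [DStep.hchange, hA0, hB0]

lemma dy_T_comp {A B C : List DStep} (hA : IsDecoratedDyck A) (hB : IsDecoratedDyck B)
    (hC : IsDecoratedDyck C) :
    IsDecoratedDyck (DStep.T :: (A ++ DStep.d :: (B ++ DStep.d :: C))) := by
  have hA0 : hsum A = 0 := hA.2
  have hB0 : hsum B = 0 := hB.2
  have hC0 : hsum C = 0 := hC.2
  constructor
  · intro p hp
    show (0:ℤ) ≤ hsum p
    cases p with
    | nil => simp
    | cons a q =>
      rw [List.cons_prefix_cons] at hp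
      obtain ⟨rfl, hq⟩ := hp
      rcases prefix_append_cases hq with hqA | ⟨q', rfl, hq'⟩
      · have : (0:ℤ) ≤ hsum q := hA.1 q hqA
        rw [hsum_cons]; simp [DStep.hchange]; omega
      · cases q' with
        | nil => rw [hsum_cons, hsum_append]; simp [DStep.hchange, hA0]
        | cons b q'' =>
          rw [List.cons_prefix_cons] at hq'
          obtain ⟨rfl, hq''⟩ := hq'
          rcases prefix_append_cases hq'' with hqB | ⟨q₃, rfl, hq₃⟩
          · have : (0:ℤ) ≤ hsum q'' := hB.1 _ hqB
            rw [hsum_cons, hsum_append, hsum_cons]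
            simp [DStep.hchange, hA0]; omega
          · cases q₃ with
            | nil =>
              rw [hsum_cons, hsum_append, hsum_cons, hsum_append]
              simp [DStep.hchange, hA0, hB0]
            | cons c q₄ =>
              rw [List.cons_prefix_cons] at hq₃
              obtain ⟨rfl, hq₄⟩ := hq₃
              have : (0:ℤ) ≤ hsum q₄ := hC.1 _ hq₄
              rw [hsum_cons, hsum_append, hsum_cons, hsum_append, hsum_cons]
              simp [DStep.hchange, hA0, hB0]; omega
  · show hsum _ = 0
    rw [hsum_cons, hsum_append, hsum_cons, hsum_append, hsum_cons]
    simp [DStep.hchange, hA0, hB0, hC0]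

lemma dy_u_decomp {v : List DStep} (h : IsDecoratedDyck (DStep.u :: v)) :
    ∃ A B, v = A ++ DStep.d :: B ∧ IsDecoratedDyck A ∧ IsDecoratedDyck B := by
  have hv : hsum v = -1 := by
    have h0 : hsum (DStep.u :: v) = 0 := h.2
    rw [hsum_cons] at h0; simp [DStep.hchange] at h0; omega
  obtain ⟨A, B, rfl, hA⟩ := fr_exists (by omega : hsum v ≤ -1)
  have hA0 : hsum A = 0 := hA.2
  refine ⟨A, B, rfl, hA, ?_, ?_⟩
  · intro p hp
    show (0:ℤ) ≤ hsum p
    obtain ⟨t, rfl⟩ := hp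
    have hpre : DStep.u :: (A ++ DStep.d :: p) <+: DStep.u :: (A ++ DStep.d :: (p ++ t)) :=
      ⟨t, by simp⟩
    have := h.1 _ hpre
    have h2 : (0:ℤ) ≤ hsum (DStep.u :: (A ++ DStep.d :: p)) := this
    rw [hsum_cons, hsum_append, hsum_cons] at h2
    simp [DStep.hchange, hA0] at h2
    omega
  · show hsum B = 0
    rw [hsum_append, hsum_cons] at hv
    simp [DStep.hchange, hA0] at hv
    omega

lemma dy_T_decomp {v : List DStep} (h : IsDecoratedDyck (DStep.T :: v)) :
    ∃ A B C, v = A ++ DStep.d :: (B ++ DStep.d :: C) ∧ IsDecoratedDyck A ∧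
      IsDecoratedDyck B ∧ IsDecoratedDyck C := by
  have hv : hsum v = -2 := by
    have h0 : hsum (DStep.T :: v) = 0 := h.2
    rw [hsum_cons] at h0; simp [DStep.hchange] at h0; omega
  obtain ⟨A, B', rfl, hA⟩ := fr_exists (by omega : hsum v ≤ -1)
  have hA0 : hsum A = 0 := hA.2
  have hB' : hsum B' = -1 := by
    rw [hsum_append, hsum_cons] at hv
    simp [DStep.hchange, hA0] at hv
    omega
  obtain ⟨B, C, rfl, hBsub⟩ := fr_exists (by omega : hsum B' ≤ -1)
  have hB0 : hsum B = 0 := hBsub.2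
  refine ⟨A, B, C, rfl, hA, hBsub, ?_, ?_⟩
  · intro p hp
    show (0:ℤ) ≤ hsum p
    obtain ⟨t, rfl⟩ := hp
    have hpre : DStep.T :: (A ++ DStep.d :: (B ++ DStep.d :: p)) <+:
        DStep.T :: (A ++ DStep.d :: (B ++ DStep.d :: (p ++ t))) := ⟨t, by simp⟩
    have h2 : (0:ℤ) ≤ hsum (DStep.T :: (A ++ DStep.d :: (B ++ DStep.d :: p))) := h.1 _ hpre
    rw [hsum_cons, hsum_append, hsum_cons, hsum_append, hsum_cons] at h2
    simp [DStep.hchange, hA0, hB0] at h2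
    omega
  · show hsum C = 0
    rw [hsum_append, hsum_cons, hsum_append, hsum_cons] at hv
    simp [DStep.hchange, hA0, hB0] at hv
    omega

end DyckAux
end Aux3
section Aux4
namespace DyckAux
open List

lemma noudu_append {x y : List DStep} (hx : NoUDU x) (hy : NoUDU y)
    (hlast : x.getLast? ≠ some DStep.u) (hhead : y.head? ≠ some DStep.u) :
    NoUDU (x ++ y) := by
  intro h
  rcases infix_append_cases h with h | h | ⟨p₁, p₂, hp, h1, h2⟩
  · exact hx h
  · exact hy h
  · cases p₁ with
    | nil =>
      simp only [List.nil_append] at hp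
      rw [← hp] at h2
      exact hy h2.isInfix
    | cons a p₁' =>
      simp only [List.cons_append, List.cons.injEq] at hp
      obtain ⟨rfl, hp⟩ := hp
      cases p₁' with
      | nil =>
        obtain ⟨ss, rfl⟩ := h1
        rw [List.getLast?_concat] at hlast
        exact hlast rfl
      | cons b p₁'' =>
        simp only [List.cons_append, List.cons.injEq] at hp
        obtain ⟨rfl, hp⟩ := hp
        cases p₁'' with
        | nil =>
          simp only [List.nil_append] at hp
          rw [← hp] at h2
          cases y with
          | nil => simp [List.prefix_nil] at h2
          | cons c y' =>
            rw [List.cons_prefix_cons] at h2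
            obtain ⟨rfl, -⟩ := h2
            simp at hhead
        | cons c p₁''' =>
          simp only [List.cons_append, List.cons.injEq] at hp
          obtain ⟨rfl, hp⟩ := hp
          have hnil : p₁''' = [] := by
            cases p₁''' with
            | nil => rfl
            | cons e p4 => simp at hp
          subst hnil
          exact hx h1.isInfix

lemma noudu_cons_not_u {a : DStep} (ha : a ≠ DStep.u) {w : List DStep} (hw : NoUDU w) :
    NoUDU (a :: w) := by
  intro h
  rcases List.infix_cons_iff.mp h with h | h
  · rw [List.cons_prefix_cons] at h
    exact ha h.1.symm
  · exact hw h

lemma noudu_u_comp {A B : List DStep} (hA : IsDecoratedDyck A) (hnA : NoUDU A)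
    (hnB : NoUDU B) (hbad : ¬(A = [] ∧ B.head? = some DStep.u)) :
    NoUDU (DStep.u :: (A ++ DStep.d :: B)) := by
  have htail : NoUDU (A ++ DStep.d :: B) :=
    noudu_append hnA (noudu_cons_not_u (by simp) hnB) (dd_getLast?_ne_u hA) (by simp)
  intro h
  rcases List.infix_cons_iff.mp h with h | h
  · rw [List.cons_prefix_cons] at h
    obtain ⟨-, h⟩ := h
    cases A with
    | nil =>
      simp only [List.nil_append] at h
      rw [List.cons_prefix_cons] at h
      obtain ⟨-, h⟩ := h
      cases B with
      | nil => simp [List.prefix_nil] at h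
      | cons b B' =>
        rw [List.cons_prefix_cons] at h
        exact hbad ⟨rfl, by rw [← h.1]; rfl⟩
    | cons a A' =>
      rw [List.cons_append, List.cons_prefix_cons] at h
      exact dd_head_ne_d hA h.1.symm
  · exact htail h

lemma noudu_T_comp {A B C : List DStep} (hA : IsDecoratedDyck A) (hB : IsDecoratedDyck B)
    (hnA : NoUDU A) (hnB : NoUDU B) (hnC : NoUDU C) :
    NoUDU (DStep.T :: (A ++ DStep.d :: (B ++ DStep.d :: C))) := by
  have h1 : NoUDU (B ++ DStep.d :: C) :=
    noudu_append hnB (noudu_cons_not_u (by simp) hnC) (dd_getLast?_ne_u hB) (by simp)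
  have h2 : NoUDU (A ++ DStep.d :: (B ++ DStep.d :: C)) :=
    noudu_append hnA (noudu_cons_not_u (by simp) h1) (dd_getLast?_ne_u hA) (by simp)
  intro h
  rcases List.infix_cons_iff.mp h with h | h
  · rw [List.cons_prefix_cons] at h
    exact absurd h.1 (by simp)
  · exact h2 h

lemma noudu_parts_u {A B : List DStep} (h : NoUDU (DStep.u :: (A ++ DStep.d :: B))) :
    NoUDU A ∧ NoUDU B ∧ ¬(A = [] ∧ B.head? = some DStep.u) := by
  refine ⟨fun hi => h (hi.trans ⟨[DStep.u], DStep.d :: B, by simp⟩),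
    fun hi => h (hi.trans ⟨DStep.u :: A ++ [DStep.d], [], by simp⟩), ?_⟩
  rintro ⟨rfl, hh⟩
  cases B with
  | nil => simp at hh
  | cons b B' =>
    simp only [List.head?_cons, Option.some.injEq] at hh
    subst hh
    exact h ⟨[], B', by simp⟩

lemma noudu_parts_T {A B C : List DStep}
    (h : NoUDU (DStep.T :: (A ++ DStep.d :: (B ++ DStep.d :: C)))) :
    NoUDU A ∧ NoUDU B ∧ NoUDU C := by
  refine ⟨fun hi => h (hi.trans ⟨[DStep.T], DStep.d :: (B ++ DStep.d :: C), by simp⟩),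
    fun hi => h (hi.trans ⟨DStep.T :: A ++ [DStep.d], DStep.d :: C, by simp⟩),
    fun hi => h (hi.trans ⟨DStep.T :: A ++ DStep.d :: B ++ [DStep.d], [], by simp⟩)⟩

end DyckAux
end Aux4
section Aux5
namespace DyckAux
open List Finset

lemma finite_D (r s : ℕ) :
    {w : List DStep | IsDecoratedDyck w ∧ NoUDU w ∧
      w.count DStep.u = r ∧ w.count DStep.T = s}.Finite := by
  apply (List.finite_length_eq DStep (2*r+3*s)).subset
  rintro w ⟨hw, -, hr, hs⟩
  have h0 : hsum w = 0 := hw.2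
  have h1 := hsum_eq_count w
  have h2 := length_eq_count w
  simp only [Set.mem_setOf_eq]
  omega

noncomputable def Dfin (r s : ℕ) : Finset (List DStep) := (finite_D r s).toFinset

lemma mem_Dfin {r s : ℕ} {w : List DStep} :
    w ∈ Dfin r s ↔ IsDecoratedDyck w ∧ NoUDU w ∧
      w.count DStep.u = r ∧ w.count DStep.T = s := (finite_D r s).mem_toFinset

lemma dyckCount_eq (r s : ℕ) : dyckCount r s = (Dfin r s).card := by
  rw [dyckCount, ← Set.ncard_coe_finset]
  congr 1
  exact ((finite_D r s).coe_toFinset).symm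

noncomputable def Ufin (r s : ℕ) : Finset (List DStep) :=
  (Dfin r s).filter (fun w => w.head? = some DStep.u)

noncomputable def Vfin (r s : ℕ) : Finset (List DStep) :=
  (Dfin r s).filter (fun w => w.head? = some DStep.T)

lemma mem_Ufin {r s : ℕ} {w : List DStep} :
    w ∈ Ufin r s ↔ (IsDecoratedDyck w ∧ NoUDU w ∧
      w.count DStep.u = r ∧ w.count DStep.T = s) ∧ w.head? = some DStep.u := by
  rw [Ufin, Finset.mem_filter, mem_Dfin]

lemma mem_Vfin {r s : ℕ} {w : List DStep} :
    w ∈ Vfin r s ↔ (IsDecoratedDyck w ∧ NoUDU w ∧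
      w.count DStep.u = r ∧ w.count DStep.T = s) ∧ w.head? = some DStep.T := by
  rw [Vfin, Finset.mem_filter, mem_Dfin]

lemma Ufin_zero (s : ℕ) : (Ufin 0 s).card = 0 := by
  rw [Finset.card_eq_zero, Finset.eq_empty_iff_forall_notMem]
  intro w hw
  obtain ⟨⟨-, -, hc, -⟩, hh⟩ := mem_Ufin.mp hw
  cases w with
  | nil => simp at hh
  | cons a v =>
    simp only [List.head?_cons, Option.some.injEq] at hh
    subst hh
    simp [List.count_cons] at hc

lemma Vfin_zero (r : ℕ) : (Vfin r 0).card = 0 := by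
  rw [Finset.card_eq_zero, Finset.eq_empty_iff_forall_notMem]
  intro w hw
  obtain ⟨⟨-, -, -, hc⟩, hh⟩ := mem_Vfin.mp hw
  cases w with
  | nil => simp at hh
  | cons a v =>
    simp only [List.head?_cons, Option.some.injEq] at hh
    subst hh
    simp [List.count_cons] at hc

lemma card_split (r s : ℕ) :
    (Dfin r s).card =
      (if r = 0 ∧ s = 0 then 1 else 0) + (Ufin r s).card + (Vfin r s).card := by
  classical
  have h1 := Finset.card_filter_add_card_filter_not
    (s := Dfin r s) (p := fun w => w.head? = some DStep.u)
  have h2 := Finset.card_filter_add_card_filter_not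
    (s := (Dfin r s).filter (fun w => ¬ w.head? = some DStep.u))
    (p := fun w => w.head? = some DStep.T)
  have hV : ((Dfin r s).filter (fun w => ¬ w.head? = some DStep.u)).filter
      (fun w => w.head? = some DStep.T) = Vfin r s := by
    rw [Vfin, Finset.filter_filter]
    apply Finset.filter_congr
    intro w _
    constructor
    · rintro ⟨-, h⟩; exact h
    · intro h; exact ⟨by rw [h]; simp, h⟩
  have hrest : (((Dfin r s).filter (fun w => ¬ w.head? = some DStep.u)).filter
      (fun w => ¬ w.head? = some DStep.T)).card = if r = 0 ∧ s = 0 then 1 else 0 := by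
    have hmem : ∀ w, w ∈ ((Dfin r s).filter (fun w => ¬ w.head? = some DStep.u)).filter
        (fun w => ¬ w.head? = some DStep.T) ↔ (w = [] ∧ r = 0 ∧ s = 0) := by
      intro w
      simp only [Finset.mem_filter, mem_Dfin]
      constructor
      · rintro ⟨⟨⟨hdd, -, hr, hs⟩, hu⟩, hT⟩
        cases w with
        | nil => simp at hr hs; exact ⟨rfl, hr.symm ▸ rfl, hs.symm ▸ rfl⟩
        | cons a v =>
          cases a with
          | u => simp at hu
          | d => exact (not_dd_cons_d hdd).elim
          | T => simp at hT
      · rintro ⟨rfl, rfl, rfl⟩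
        exact ⟨⟨⟨dd_nil, noudu_nil, rfl, rfl⟩, by simp⟩, by simp⟩
    by_cases hrs : r = 0 ∧ s = 0
    · obtain ⟨rfl, rfl⟩ := hrs
      rw [if_pos ⟨rfl, rfl⟩]
      have : ((Dfin 0 0).filter (fun w => ¬ w.head? = some DStep.u)).filter
          (fun w => ¬ w.head? = some DStep.T) = {([] : List DStep)} := by
        apply Finset.ext
        intro w
        rw [hmem w, Finset.mem_singleton]
        simp
      rw [this, Finset.card_singleton]
    · rw [if_neg hrs]
      rw [Finset.card_eq_zero, Finset.eq_empty_iff_forall_notMem]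
      intro w hw
      exact hrs ((hmem w).mp hw).2
  have hU : (Dfin r s).filter (fun w => w.head? = some DStep.u) = Ufin r s := rfl
  rw [hU] at h1
  rw [hV, hrest] at h2
  omega

end DyckAux
end Aux5
section Aux6
namespace DyckAux
open List Finset

section PairCount

variable {α β : Type*} [DecidableEq α] [DecidableEq β]

def PF (SA : ℕ → ℕ → Finset α) (SB : ℕ → ℕ → Finset β) (r s : ℕ) : Finset (α × β) :=
  (Finset.HasAntidiagonal.antidiagonal r ×ˢ Finset.HasAntidiagonal.antidiagonal s).biUnion
    fun q => SA q.1.1 q.2.1 ×ˢ SB q.1.2 q.2.2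

variable {SA : ℕ → ℕ → Finset α} {SB : ℕ → ℕ → Finset β}
  {pA : α → Prop} {uA vA : α → ℕ} {pB : β → Prop} {uB vB : β → ℕ}
  (hSA : ∀ r s a, a ∈ SA r s ↔ pA a ∧ uA a = r ∧ vA a = s)
  (hSB : ∀ r s b, b ∈ SB r s ↔ pB b ∧ uB b = r ∧ vB b = s)

include hSA hSB

lemma mem_PF {r s : ℕ} {x : α × β} :
    x ∈ PF SA SB r s ↔
      pA x.1 ∧ pB x.2 ∧ uA x.1 + uB x.2 = r ∧ vA x.1 + vB x.2 = s := by
  simp only [PF, Finset.mem_biUnion, Finset.mem_product, Finset.HasAntidiagonal.mem_antidiagonal]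
  constructor
  · rintro ⟨⟨⟨r1, r2⟩, ⟨s1, s2⟩⟩, ⟨hr, hs⟩, hx1, hx2⟩
    obtain ⟨h1, hu1, hv1⟩ := (hSA _ _ _).mp hx1
    obtain ⟨h2, hu2, hv2⟩ := (hSB _ _ _).mp hx2
    exact ⟨h1, h2, by simp_all, by simp_all⟩
  · rintro ⟨h1, h2, hu, hv⟩
    exact ⟨⟨(uA x.1, uB x.2), (vA x.1, vB x.2)⟩, ⟨hu, hv⟩,
      (hSA _ _ _).mpr ⟨h1, rfl, rfl⟩, (hSB _ _ _).mpr ⟨h2, rfl, rfl⟩⟩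

lemma card_PF (r s : ℕ) :
    (PF SA SB r s).card = ∑ p ∈ Finset.HasAntidiagonal.antidiagonal r, ∑ q ∈ Finset.HasAntidiagonal.antidiagonal s,
      (SA p.1 q.1).card * (SB p.2 q.2).card := by
  rw [PF, Finset.card_biUnion]
  · rw [Finset.sum_product]
    exact Finset.sum_congr rfl fun p _ => Finset.sum_congr rfl fun q _ =>
      Finset.card_product _ _
  · rintro ⟨⟨r1, r2⟩, ⟨s1, s2⟩⟩ h1 ⟨⟨r1', r2'⟩, ⟨s1', s2'⟩⟩ h2 hne
    rw [Function.onFun, Finset.disjoint_left]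
    rintro ⟨a, b⟩ hx1 hx2
    rw [Finset.mem_product] at hx1 hx2
    dsimp only at hx1 hx2
    obtain ⟨-, hu1, hv1⟩ := (hSA _ _ _).mp hx1.1
    obtain ⟨-, hu2, hv2⟩ := (hSB _ _ _).mp hx1.2
    obtain ⟨-, hu1', hv1'⟩ := (hSA _ _ _).mp hx2.1
    obtain ⟨-, hu2', hv2'⟩ := (hSB _ _ _).mp hx2.2
    apply hne
    simp only [Prod.mk.injEq]
    omega

end PairCount

lemma mem_Dfin' (r s : ℕ) (w : List DStep) :
    w ∈ Dfin r s ↔ (IsDecoratedDyck w ∧ NoUDU w) ∧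
      w.count DStep.u = r ∧ w.count DStep.T = s := by
  rw [mem_Dfin]; tauto

noncomputable def P2 (r s : ℕ) : Finset (List DStep × List DStep) := PF Dfin Dfin r s

lemma mem_P2 {r s : ℕ} {x : List DStep × List DStep} :
    x ∈ P2 r s ↔ (IsDecoratedDyck x.1 ∧ NoUDU x.1) ∧ (IsDecoratedDyck x.2 ∧ NoUDU x.2) ∧
      x.1.count DStep.u + x.2.count DStep.u = r ∧
      x.1.count DStep.T + x.2.count DStep.T = s :=
  mem_PF mem_Dfin' mem_Dfin'

lemma mem_P2' (r s : ℕ) (x : List DStep × List DStep) :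
    x ∈ P2 r s ↔ ((IsDecoratedDyck x.1 ∧ NoUDU x.1) ∧ (IsDecoratedDyck x.2 ∧ NoUDU x.2)) ∧
      x.1.count DStep.u + x.2.count DStep.u = r ∧
      x.1.count DStep.T + x.2.count DStep.T = s := by
  rw [mem_P2]; tauto

noncomputable def P3 (r s : ℕ) : Finset (List DStep × (List DStep × List DStep)) :=
  PF Dfin P2 r s

lemma mem_P3 {r s : ℕ} {x : List DStep × (List DStep × List DStep)} :
    x ∈ P3 r s ↔ (IsDecoratedDyck x.1 ∧ NoUDU x.1) ∧
      ((IsDecoratedDyck x.2.1 ∧ NoUDU x.2.1) ∧ (IsDecoratedDyck x.2.2 ∧ NoUDU x.2.2)) ∧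
      x.1.count DStep.u + (x.2.1.count DStep.u + x.2.2.count DStep.u) = r ∧
      x.1.count DStep.T + (x.2.1.count DStep.T + x.2.2.count DStep.T) = s :=
  mem_PF mem_Dfin' mem_P2'

lemma card_P2 (r s : ℕ) :
    (P2 r s).card = ∑ p ∈ Finset.HasAntidiagonal.antidiagonal r, ∑ q ∈ Finset.HasAntidiagonal.antidiagonal s,
      dyckCount p.1 q.1 * dyckCount p.2 q.2 := by
  rw [P2, card_PF mem_Dfin' mem_Dfin']
  exact Finset.sum_congr rfl fun p _ => Finset.sum_congr rfl fun q _ => by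
    rw [dyckCount_eq, dyckCount_eq]

lemma card_P3 (r s : ℕ) :
    (P3 r s).card = ∑ p ∈ Finset.HasAntidiagonal.antidiagonal r, ∑ q ∈ Finset.HasAntidiagonal.antidiagonal s,
      dyckCount p.1 q.1 * (P2 p.2 q.2).card := by
  rw [P3, card_PF mem_Dfin' mem_P2']
  exact Finset.sum_congr rfl fun p _ => Finset.sum_congr rfl fun q _ => by
    rw [dyckCount_eq]

lemma card_P2_split (r s : ℕ) :
    (P2 r s).card = (Ufin (r+1) s).card + (Ufin r s).card := by
  classical
  have hsplit := Finset.card_filter_add_card_filter_not (s := P2 r s)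
    (p := fun x => x.1 = ([] : List DStep) ∧ x.2.head? = some DStep.u)
  have hgood : ((P2 r s).filter
      (fun x => ¬(x.1 = ([] : List DStep) ∧ x.2.head? = some DStep.u))).card
      = (Ufin (r+1) s).card := by
    apply Finset.card_bij (i := fun p _ => DStep.u :: (p.1 ++ DStep.d :: p.2))
    · rintro ⟨A, B⟩ hp
      rw [Finset.mem_filter, mem_P2] at hp
      obtain ⟨⟨⟨hA, hnA⟩, ⟨hB, hnB⟩, hu, hT⟩, hbad⟩ := hp
      dsimp only at hu hT hbad
      rw [mem_Ufin]
      refine ⟨⟨dy_u_comp hA hB, noudu_u_comp hA hnA hnB hbad, ?_, ?_⟩, by simp⟩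
      · simp only [List.count_cons, List.count_append]
        simp
        omega
      · simp only [List.count_cons, List.count_append]
        simp
        omega
    · rintro ⟨A₁, B₁⟩ h₁ ⟨A₂, B₂⟩ h₂ heq
      rw [Finset.mem_filter, mem_P2] at h₁ h₂
      simp only [List.cons.injEq, true_and] at heq
      obtain ⟨hA, hB⟩ := fr_unique h₁.1.1.1 h₂.1.1.1 heq
      dsimp only at hA
      simp [hA, hB]
    · intro w hw
      rw [mem_Ufin] at hw
      obtain ⟨⟨hdd, hnw, hcu, hcT⟩, hh⟩ := hw
      cases w with
      | nil => simp at hh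
      | cons a v =>
        simp only [List.head?_cons, Option.some.injEq] at hh
        subst hh
        obtain ⟨A, B, rfl, hA, hB⟩ := dy_u_decomp hdd
        obtain ⟨hnA, hnB, hbad⟩ := noudu_parts_u hnw
        refine ⟨(A, B), ?_, rfl⟩
        rw [Finset.mem_filter, mem_P2]
        simp only [List.count_cons, List.count_append] at hcu hcT
        simp at hcu hcT
        exact ⟨⟨⟨hA, hnA⟩, ⟨hB, hnB⟩, by dsimp only; omega, by dsimp only; omega⟩, hbad⟩
  have hbadc : ((P2 r s).filter
      (fun x => x.1 = ([] : List DStep) ∧ x.2.head? = some DStep.u)).card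
      = (Ufin r s).card := by
    apply Finset.card_bij (i := fun p _ => p.2)
    · rintro ⟨A, B⟩ hp
      rw [Finset.mem_filter, mem_P2] at hp
      obtain ⟨⟨-, ⟨hB, hnB⟩, hu, hT⟩, hA0, hh⟩ := hp
      dsimp only at hA0 hu hT hh
      subst hA0
      simp only [List.count_nil, Nat.zero_add] at hu hT
      exact mem_Ufin.mpr ⟨⟨hB, hnB, hu, hT⟩, hh⟩
    · rintro ⟨A₁, B₁⟩ h₁ ⟨A₂, B₂⟩ h₂ heq
      rw [Finset.mem_filter] at h₁ h₂
      have e1 : A₁ = [] := h₁.2.1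
      have e2 : A₂ = [] := h₂.2.1
      dsimp only at heq
      simp [e1, e2, heq]
    · intro w hw
      rw [mem_Ufin] at hw
      obtain ⟨⟨hdd, hnw, hcu, hcT⟩, hh⟩ := hw
      refine ⟨(([] : List DStep), w), ?_, rfl⟩
      rw [Finset.mem_filter, mem_P2]
      refine ⟨⟨⟨dd_nil, noudu_nil⟩, ⟨hdd, hnw⟩, ?_, ?_⟩, rfl, hh⟩ <;> dsimp only <;>
        simp [hcu, hcT]
  omega

lemma card_P3_eq (r s : ℕ) : (P3 r s).card = (Vfin r (s+1)).card := by
  classical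
  apply Finset.card_bij
    (i := fun t _ => DStep.T :: (t.1 ++ DStep.d :: (t.2.1 ++ DStep.d :: t.2.2)))
  · rintro ⟨A, B, C⟩ ht
    rw [mem_P3] at ht
    obtain ⟨⟨hA, hnA⟩, ⟨⟨hB, hnB⟩, ⟨hC, hnC⟩⟩, hu, hT⟩ := ht
    dsimp only at hu hT
    rw [mem_Vfin]
    refine ⟨⟨dy_T_comp hA hB hC, noudu_T_comp hA hB hnA hnB hnC, ?_, ?_⟩, by simp⟩
    · simp only [List.count_cons, List.count_append]
      simp
      omega
    · simp only [List.count_cons, List.count_append]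
      simp
      omega
  · rintro ⟨A₁, B₁, C₁⟩ h₁ ⟨A₂, B₂, C₂⟩ h₂ heq
    rw [mem_P3] at h₁ h₂
    simp only [List.cons.injEq, true_and] at heq
    obtain ⟨hA, hrest⟩ := fr_unique h₁.1.1 h₂.1.1 heq
    obtain ⟨hB, hC⟩ := fr_unique h₁.2.1.1.1 h₂.2.1.1.1 hrest
    dsimp only at hA hB hC
    simp [hA, hB, hC]
  · intro w hw
    rw [mem_Vfin] at hw
    obtain ⟨⟨hdd, hnw, hcu, hcT⟩, hh⟩ := hw
    cases w with
    | nil => simp at hh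
    | cons a v =>
      simp only [List.head?_cons, Option.some.injEq] at hh
      subst hh
      obtain ⟨A, B, C, rfl, hA, hB, hC⟩ := dy_T_decomp hdd
      obtain ⟨hnA, hnB, hnC⟩ := noudu_parts_T hnw
      refine ⟨(A, B, C), ?_, rfl⟩
      rw [mem_P3]
      simp only [List.count_cons, List.count_append] at hcu hcT
      simp at hcu hcT
      exact ⟨⟨hA, hnA⟩, ⟨⟨hB, hnB⟩, ⟨hC, hnC⟩⟩, by dsimp only; omega, by dsimp only; omega⟩

end DyckAux
end Aux6
section Aux7
namespace DyckAux
open Finset MvPowerSeries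

noncomputable def Qn (r s : ℕ) : ℕ :=
  ∑ p ∈ Finset.HasAntidiagonal.antidiagonal r, ∑ q ∈ Finset.HasAntidiagonal.antidiagonal s,
    dyckCount p.1 q.1 * dyckCount p.2 q.2

noncomputable def Cn (r s : ℕ) : ℕ :=
  ∑ p ∈ Finset.HasAntidiagonal.antidiagonal r, ∑ q ∈ Finset.HasAntidiagonal.antidiagonal s,
    dyckCount p.1 q.1 * Qn p.2 q.2

lemma P2_card_Qn (r s : ℕ) : (P2 r s).card = Qn r s := card_P2 r s

lemma P3_card_Cn (r s : ℕ) : (P3 r s).card = Cn r s := by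
  rw [card_P3, Cn]
  exact Finset.sum_congr rfl fun p _ => Finset.sum_congr rfl fun q _ => by
    rw [P2_card_Qn]

lemma key_I (r s : ℕ) :
    dyckCount r s = (if r = 0 ∧ s = 0 then 1 else 0) + (Ufin r s).card + (Vfin r s).card := by
  rw [dyckCount_eq]; exact card_split r s

lemma key_II (r s : ℕ) : Qn r s = (Ufin (r+1) s).card + (Ufin r s).card := by
  rw [← P2_card_Qn]; exact card_P2_split r s

lemma key_III (r s : ℕ) : Cn r s = (Vfin r (s+1)).card := by
  rw [← P3_card_Cn]; exact card_P3_eq r s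

noncomputable def fn2 (x y : ℕ) : Fin 2 →₀ ℕ := Finsupp.single 0 x + Finsupp.single 1 y

@[simp] lemma fn2_apply0 (x y : ℕ) : fn2 x y 0 = x := by
  simp [fn2, Finsupp.single_apply]

@[simp] lemma fn2_apply1 (x y : ℕ) : fn2 x y 1 = y := by
  simp [fn2, Finsupp.single_apply]

lemma fn2_eq (e : Fin 2 →₀ ℕ) : fn2 (e 0) (e 1) = e := by
  ext a
  fin_cases a
  · exact fn2_apply0 _ _
  · exact fn2_apply1 _ _

lemma eq_zero_iff (e : Fin 2 →₀ ℕ) : e = 0 ↔ e 0 = 0 ∧ e 1 = 0 := by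
  constructor
  · rintro rfl; simp
  · rintro ⟨h0, h1⟩
    ext a
    fin_cases a
    · simpa using h0
    · simpa using h1

lemma coeff_mul_eq (f g : MvPowerSeries (Fin 2) ℚ) (F G : ℕ → ℕ → ℚ)
    (hf : ∀ e, MvPowerSeries.coeff e f = F (e 0) (e 1))
    (hg : ∀ e, MvPowerSeries.coeff e g = G (e 0) (e 1)) (e : Fin 2 →₀ ℕ) :
    MvPowerSeries.coeff e (f * g) =
      ∑ p ∈ Finset.HasAntidiagonal.antidiagonal (e 0), ∑ q ∈ Finset.HasAntidiagonal.antidiagonal (e 1),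
        F p.1 q.1 * G p.2 q.2 := by
  have h1 : MvPowerSeries.coeff e (f * g) =
      ∑ x ∈ Finset.HasAntidiagonal.antidiagonal (e 0) ×ˢ Finset.HasAntidiagonal.antidiagonal (e 1),
        F x.1.1 x.2.1 * G x.1.2 x.2.2 := by
    rw [MvPowerSeries.coeff_mul]
    apply Finset.sum_nbij' (i := fun x => ((x.1 0, x.2 0), (x.1 1, x.2 1)))
      (j := fun y => (fn2 y.1.1 y.2.1, fn2 y.1.2 y.2.2))
    · intro a ha
      rw [Finset.HasAntidiagonal.mem_antidiagonal] at ha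
      rw [Finset.mem_product, Finset.HasAntidiagonal.mem_antidiagonal, Finset.HasAntidiagonal.mem_antidiagonal]
      constructor
      · show a.1 0 + a.2 0 = e 0
        rw [← ha]; rfl
      · show a.1 1 + a.2 1 = e 1
        rw [← ha]; rfl
    · intro b hb
      rw [Finset.mem_product, Finset.HasAntidiagonal.mem_antidiagonal, Finset.HasAntidiagonal.mem_antidiagonal] at hb
      rw [Finset.HasAntidiagonal.mem_antidiagonal]
      ext a
      fin_cases a
      · simpa [Finsupp.add_apply] using hb.1
      · simpa [Finsupp.add_apply] using hb.2
    · intro a _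
      exact Prod.ext (fn2_eq _) (fn2_eq _)
    · intro b _
      simp [Prod.ext_iff]
    · intro a _
      rw [hf, hg]
  rw [h1, Finset.sum_product]

lemma coeff_dyckGF (e : Fin 2 →₀ ℕ) :
    MvPowerSeries.coeff e dyckGF = (dyckCount (e 0) (e 1) : ℚ) := rfl

lemma coeff_sq (e : Fin 2 →₀ ℕ) :
    MvPowerSeries.coeff e (dyckGF ^ 2) = (Qn (e 0) (e 1) : ℚ) := by
  rw [pow_two, coeff_mul_eq dyckGF dyckGF (fun r s => (dyckCount r s : ℚ))
    (fun r s => (dyckCount r s : ℚ)) coeff_dyckGF coeff_dyckGF]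
  simp only [Qn]
  push_cast
  rfl

lemma coeff_cube (e : Fin 2 →₀ ℕ) :
    MvPowerSeries.coeff e (dyckGF ^ 3) = (Cn (e 0) (e 1) : ℚ) := by
  have h3 : dyckGF ^ 3 = dyckGF * dyckGF ^ 2 := by ring
  rw [h3, coeff_mul_eq dyckGF (dyckGF ^ 2) (fun r s => (dyckCount r s : ℚ))
    (fun r s => (Qn r s : ℚ)) coeff_dyckGF coeff_sq]
  simp only [Cn]
  push_cast
  rfl

lemma coeff_X_mul (i : Fin 2) (f : MvPowerSeries (Fin 2) ℚ) (e : Fin 2 →₀ ℕ) :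
    MvPowerSeries.coeff e (MvPowerSeries.X i * f) =
      if 1 ≤ e i then MvPowerSeries.coeff (e - Finsupp.single i 1) f else 0 := by
  rw [MvPowerSeries.X_def, MvPowerSeries.coeff_monomial_mul]
  simp [Finsupp.single_le_iff]

noncomputable def Ugf : MvPowerSeries (Fin 2) ℚ := fun e => ((Ufin (e 0) (e 1)).card : ℚ)

noncomputable def Vgf : MvPowerSeries (Fin 2) ℚ := fun e => ((Vfin (e 0) (e 1)).card : ℚ)

lemma coeff_Ugf (e : Fin 2 →₀ ℕ) :
    MvPowerSeries.coeff e Ugf = ((Ufin (e 0) (e 1)).card : ℚ) := rfl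

lemma coeff_Vgf (e : Fin 2 →₀ ℕ) :
    MvPowerSeries.coeff e Vgf = ((Vfin (e 0) (e 1)).card : ℚ) := rfl

lemma sub_single00 (e : Fin 2 →₀ ℕ) : ((e - Finsupp.single 0 1 : Fin 2 →₀ ℕ)) (0 : Fin 2) = e 0 - 1 := by
  simp [Finsupp.tsub_apply]

lemma sub_single01 (e : Fin 2 →₀ ℕ) : ((e - Finsupp.single 0 1 : Fin 2 →₀ ℕ)) (1 : Fin 2) = e 1 := by
  rw [Finsupp.tsub_apply, Finsupp.single_apply, if_neg (by decide)]
  simp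

lemma sub_single10 (e : Fin 2 →₀ ℕ) : ((e - Finsupp.single 1 1 : Fin 2 →₀ ℕ)) (0 : Fin 2) = e 0 := by
  rw [Finsupp.tsub_apply, Finsupp.single_apply, if_neg (by decide)]
  simp

lemma sub_single11 (e : Fin 2 →₀ ℕ) : ((e - Finsupp.single 1 1 : Fin 2 →₀ ℕ)) (1 : Fin 2) = e 1 - 1 := by
  simp [Finsupp.tsub_apply]

lemma E1 : dyckGF = 1 + Ugf + Vgf := by
  apply MvPowerSeries.ext
  intro e
  rw [map_add, map_add, MvPowerSeries.coeff_one, coeff_dyckGF, coeff_Ugf, coeff_Vgf,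
    key_I (e 0) (e 1)]
  simp only [eq_zero_iff]
  split_ifs <;> push_cast <;> ring

lemma E2 : (1 + MvPowerSeries.X 0) * Ugf = MvPowerSeries.X 0 * dyckGF ^ 2 := by
  apply MvPowerSeries.ext
  intro e
  rw [add_mul, one_mul, map_add, coeff_X_mul, coeff_X_mul, coeff_Ugf,
    coeff_Ugf (e - Finsupp.single 0 1), coeff_sq (e - Finsupp.single 0 1),
    sub_single00, sub_single01]
  have key : ∀ r s : ℕ,
      ((Ufin r s).card : ℚ) + (if 1 ≤ r then ((Ufin (r-1) s).card : ℚ) else 0) =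
        if 1 ≤ r then (Qn (r-1) s : ℚ) else 0 := by
    intro r s
    cases r with
    | zero => simp [Ufin_zero]
    | succ r =>
      rw [if_pos (by omega : 1 ≤ r + 1), if_pos (by omega : 1 ≤ r + 1),
        Nat.add_sub_cancel, key_II r s]
      push_cast
      ring
  exact key (e 0) (e 1)

lemma E3 : Vgf = MvPowerSeries.X 1 * dyckGF ^ 3 := by
  apply MvPowerSeries.ext
  intro e
  rw [coeff_X_mul, coeff_Vgf, coeff_cube (e - Finsupp.single 1 1),
    sub_single10, sub_single11]
  have key : ∀ r s : ℕ,
      ((Vfin r s).card : ℚ) = if 1 ≤ s then (Cn r (s-1) : ℚ) else 0 := by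
    intro r s
    cases s with
    | zero => simp [Vfin_zero]
    | succ s =>
      rw [if_pos (by omega : 1 ≤ s + 1), Nat.add_sub_cancel]
      exact_mod_cast (key_III r s).symm
  exact key (e 0) (e 1)

end DyckAux
end Aux7

theorem dyckGF_cubic :
    dyckGF = 1 + (MvPowerSeries.X 0) * (1 + MvPowerSeries.X 0)⁻¹ * dyckGF ^ 2 +
        (MvPowerSeries.X 1) * dyckGF ^ 3 ∧
      (1 + MvPowerSeries.X 0) * dyckGF =
        (1 + MvPowerSeries.X 0) + (MvPowerSeries.X 0) * dyckGF ^ 2 +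
          (1 + MvPowerSeries.X 0) * (MvPowerSeries.X 1) * dyckGF ^ 3 := by
  have hE1 := DyckAux.E1
  have hE2 := DyckAux.E2
  have hE3 := DyckAux.E3
  have h2nd : (1 + MvPowerSeries.X 0) * dyckGF =
      (1 + MvPowerSeries.X 0) + (MvPowerSeries.X 0) * dyckGF ^ 2 +
        (1 + MvPowerSeries.X 0) * (MvPowerSeries.X 1) * dyckGF ^ 3 := by
    linear_combination (1 + MvPowerSeries.X (R := ℚ) 0) * hE1 + hE2 +
      (1 + MvPowerSeries.X (R := ℚ) 0) * hE3
  refine ⟨?_, h2nd⟩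
  have hc : MvPowerSeries.constantCoeff (1 + MvPowerSeries.X 0 : MvPowerSeries (Fin 2) ℚ) ≠ 0 := by
    rw [map_add, map_one, MvPowerSeries.constantCoeff_X]
    norm_num
  have hinv : (1 + MvPowerSeries.X 0 : MvPowerSeries (Fin 2) ℚ)⁻¹ *
      (1 + MvPowerSeries.X 0) = 1 := MvPowerSeries.inv_mul_cancel _ hc
  have hU : DyckAux.Ugf = (1 + MvPowerSeries.X 0)⁻¹ * (MvPowerSeries.X 0 * dyckGF ^ 2) := by
    calc DyckAux.Ugf = ((1 + MvPowerSeries.X 0)⁻¹ * (1 + MvPowerSeries.X 0)) * DyckAux.Ugf := by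
          rw [hinv, one_mul]
      _ = (1 + MvPowerSeries.X 0)⁻¹ * ((1 + MvPowerSeries.X 0) * DyckAux.Ugf) := by ring
      _ = _ := by rw [hE2]
  linear_combination hE1 + hU + hE3
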